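/- For a semantic Horn system with μ the least fixed point of its immediate consequence operator: there exists a tuple of relations R that is a solution of the system (i.e. satisfies all base, induction, and end clauses) if and only if μ is a solution of the system. -/
import Mathlib


universe u

/-- A semantic Horn system over `M` with `n` predicate places of arities `k`. -/
structure HornSystem (M : Type u) (n : ℕ) (k : Fin n → ℕ) where
  /-- index type for base clauses -/
  BaseIdx : Type u
  baseTarget : BaseIdx → Fin n
  BaseParam : BaseIdx → Type u
  baseC : (b : BaseIdx) → BaseParam b → Prop
  baseHead : (b : BaseIdx) → BaseParam b → Fin (k (baseTarget b)) → M
  /-- index type for induction clauses -/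
  IndIdx : Type u
  indTarget : IndIdx → Fin n
  IndParam : IndIdx → Type u
  indC : (c : IndIdx) → IndParam c → Prop
  indLen : IndIdx → ℕ
  indLenPos : ∀ c, 1 ≤ indLen c
  indBodyIdx : (c : IndIdx) → Fin (indLen c) → Fin n
  indBody : (c : IndIdx) → (l : Fin (indLen c)) → IndParam c → Fin (k (indBodyIdx c l)) → M
  indHead : (c : IndIdx) → IndParam c → Fin (k (indTarget c)) → M
  /-- index type for end clauses -/
  EndIdx : Type u
  EndParam : EndIdx → Type u
  endC : (e : EndIdx) → EndParam e → Prop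
  endLen : EndIdx → ℕ
  endLenPos : ∀ e, 1 ≤ endLen e
  endBodyIdx : (e : EndIdx) → Fin (endLen e) → Fin n
  endBody : (e : EndIdx) → (l : Fin (endLen e)) → EndParam e → Fin (k (endBodyIdx e l)) → M

namespace HornSystem

variable {M : Type u} {n : ℕ} {k : Fin n → ℕ}

/-- `R` satisfies all base clauses. -/
def SatBase (S : HornSystem M n k) (R : ∀ j, Set (Fin (k j) → M)) : Prop :=
  ∀ b p, S.baseC b p → S.baseHead b p ∈ R (S.baseTarget b)

/-- `R` satisfies all induction clauses. -/
def SatInd (S : HornSystem M n k) (R : ∀ j, Set (Fin (k j) → M)) : Prop :=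
  ∀ c p, S.indC c p → (∀ l, S.indBody c l p ∈ R (S.indBodyIdx c l)) →
    S.indHead c p ∈ R (S.indTarget c)

/-- `R` satisfies all end clauses. -/
def SatEnd (S : HornSystem M n k) (R : ∀ j, Set (Fin (k j) → M)) : Prop :=
  ∀ e, ¬ ∃ p, S.endC e p ∧ ∀ l, S.endBody e l p ∈ R (S.endBodyIdx e l)

/-- `R` is a solution of the system: it satisfies every clause. -/
def IsSolution (S : HornSystem M n k) (R : ∀ j, Set (Fin (k j) → M)) : Prop :=
  S.SatBase R ∧ S.SatInd R ∧ S.SatEnd R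

/-- The immediate consequence operator of the system. -/
def F (S : HornSystem M n k) (R : ∀ j, Set (Fin (k j) → M)) :
    ∀ j, Set (Fin (k j) → M) := fun j =>
  {a | (∃ b, ∃ h : S.baseTarget b = j, ∃ p, S.baseC b p ∧ a = h ▸ S.baseHead b p) ∨
       (∃ c, ∃ h : S.indTarget c = j, ∃ p, S.indC c p ∧
          (∀ l, S.indBody c l p ∈ R (S.indBodyIdx c l)) ∧ a = h ▸ S.indHead c p)}

theorem F_mono (S : HornSystem M n k) : Monotone S.F := by
  intro R R' h j a ha
  rcases ha with ⟨b, hb, p, hC, ha⟩ | ⟨c, hc, p, hC, hbody, ha⟩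
  · exact Or.inl ⟨b, hb, p, hC, ha⟩
  · exact Or.inr ⟨c, hc, p, hC, fun l => h _ (hbody l), ha⟩

/-- The immediate consequence operator, bundled as a monotone map. -/
def Fhom (S : HornSystem M n k) :
    (∀ j, Set (Fin (k j) → M)) →o (∀ j, Set (Fin (k j) → M)) :=
  ⟨S.F, S.F_mono⟩

/-- The least fixed point of the immediate consequence operator
(exists by the Knaster–Tarski theorem). -/
def mu (S : HornSystem M n k) : ∀ j, Set (Fin (k j) → M) :=
  OrderHom.lfp S.Fhom

end HornSystem

/-- A semantic Horn system has a solution iff the least fixed point `μ`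
of its immediate consequence operator is a solution. -/
theorem hornSystem_solvable_iff_mu_solution {M : Type u} {n : ℕ} {k : Fin n → ℕ}
    (S : HornSystem M n k) :
    (∃ R : ∀ j, Set (Fin (k j) → M), S.IsSolution R) ↔ S.IsSolution S.mu := by
  constructor
  · rintro ⟨R, hB, hI, hE⟩
    have hpre : S.F R ≤ R := by
      intro j a ha
      rcases ha with ⟨b, h, p, hC, rfl⟩ | ⟨c, h, p, hC, hbody, rfl⟩
      · subst h; exact hB b p hC
      · subst h; exact hI c p hC hbody
    have hle : S.mu ≤ R := OrderHom.lfp_le S.Fhom hpre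
    have hfix : S.F S.mu = S.mu := OrderHom.map_lfp S.Fhom
    refine ⟨?_, ?_, ?_⟩
    · intro b p hC
      rw [← hfix]
      exact Or.inl ⟨b, rfl, p, hC, rfl⟩
    · intro c p hC hbody
      rw [← hfix]
      exact Or.inr ⟨c, rfl, p, hC, hbody, rfl⟩
    · intro e ⟨p, hC, hbody⟩
      exact hE e ⟨p, hC, fun l => hle _ (hbody l)⟩
  · intro h; exact ⟨S.mu, h⟩
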